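/- Let A and B be Hermitian 2×2 complex matrices. Then there exist Hermitian 2×2 matrices A₀ and B₀ satisfying trace(A₀) = 0, trace(B₀) = 0 and trace(A₀·B₀) = 0, together with real numbers λ and t₀ and a real number c > 0, such that trace(exp(t·A + B)) = c·e^{tλ}·trace(exp((t + t₀)·A₀ + B₀)) holds for every real number t. -/

import Mathlib

open Matrix NormedSpace

lemma trace_mul_conjTranspose_re_pos (M : Matrix (Fin 2) (Fin 2) ℂ) (h : M ≠ 0) :
    0 < (Matrix.trace (M * Mᴴ)).re := by
  have htr : Matrix.trace (M * Mᴴ) = ∑ i, ∑ j, (Complex.normSq (M i j) : ℂ) := by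
    simp [Matrix.trace, Matrix.mul_apply, Matrix.conjTranspose_apply, Matrix.diag,
      Complex.mul_conj]
  rw [htr]
  rw [Complex.re_sum]
  simp only [Complex.re_sum, Complex.ofReal_re]
  obtain ⟨i, j, hij⟩ : ∃ i j, M i j ≠ 0 := by
    by_contra hc
    push_neg at hc
    exact h (by ext i j; simp [hc])
  refine Finset.sum_pos' (fun i _ => Finset.sum_nonneg fun j _ => Complex.normSq_nonneg _) ?_
  refine ⟨i, Finset.mem_univ i, Finset.sum_pos' (fun j _ => Complex.normSq_nonneg _) ?_⟩
  exact ⟨j, Finset.mem_univ j, Complex.normSq_pos.mpr hij⟩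

lemma exp_smul_one_add (z : ℂ) (M : Matrix (Fin 2) (Fin 2) ℂ) :
    exp (z • (1 : Matrix (Fin 2) (Fin 2) ℂ) + M) = Complex.exp z • exp M := by
  have hc : Commute (z • (1 : Matrix (Fin 2) (Fin 2) ℂ)) M :=
    (Commute.one_left M).smul_left z
  rw [Matrix.exp_add_of_commute _ _ hc]
  have h1 : z • (1 : Matrix (Fin 2) (Fin 2) ℂ) = Matrix.diagonal (fun _ => z) :=
    Matrix.smul_one_eq_diagonal z
  rw [h1, Matrix.exp_diagonal]
  have h2 : (exp (fun _ => z : Fin 2 → ℂ)) = fun _ => Complex.exp z := by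
    rw [Pi.exp_def]
    funext i
    rw [Complex.exp_eq_exp_ℂ]
  rw [h2, ← Matrix.smul_one_eq_diagonal, Matrix.smul_mul, Matrix.one_mul]

theorem stmt4 (A B : Matrix (Fin 2) (Fin 2) ℂ)
    (hA : A.IsHermitian) (hB : B.IsHermitian) :
    ∃ (A₀ B₀ : Matrix (Fin 2) (Fin 2) ℂ) (lam t₀ c : ℝ),
      A₀.IsHermitian ∧ B₀.IsHermitian ∧
      A₀.trace = 0 ∧ B₀.trace = 0 ∧ (A₀ * B₀).trace = 0 ∧ 0 < c ∧
      ∀ t : ℝ, (exp ((t : ℂ) • A + B)).trace =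
        (c : ℂ) * (Real.exp (t * lam) : ℝ) *
          (exp (((t + t₀ : ℝ) : ℂ) • A₀ + B₀)).trace := by
  classical
  set a : ℝ := (A.trace).re / 2 with ha
  set b : ℝ := (B.trace).re / 2 with hb
  have htrA : A.trace = ((A.trace).re : ℂ) := by
    have h1 := Matrix.trace_conjTranspose A
    rw [hA] at h1
    exact (Complex.conj_eq_iff_re.mp h1.symm).symm
  have htrB : B.trace = ((B.trace).re : ℂ) := by
    have h1 := Matrix.trace_conjTranspose B
    rw [hB] at h1
    exact (Complex.conj_eq_iff_re.mp h1.symm).symm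
  set A₀ : Matrix (Fin 2) (Fin 2) ℂ := A - (a : ℂ) • 1 with hA₀def
  set B₁ : Matrix (Fin 2) (Fin 2) ℂ := B - (b : ℂ) • 1 with hB₁def
  have hsmulHerm : ∀ r : ℝ, ((r : ℂ) • (1 : Matrix (Fin 2) (Fin 2) ℂ)).IsHermitian := by
    intro r
    simp [Matrix.IsHermitian, Matrix.conjTranspose_smul, Complex.conj_ofReal]
  have hA₀ : A₀.IsHermitian := hA.sub (hsmulHerm a)
  have hB₁ : B₁.IsHermitian := hB.sub (hsmulHerm b)
  have htr1 : Matrix.trace (1 : Matrix (Fin 2) (Fin 2) ℂ) = 2 := by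
    simp [Matrix.trace_one]
  have trA₀ : A₀.trace = 0 := by
    rw [hA₀def, Matrix.trace_sub, Matrix.trace_smul, htr1, htrA]
    push_cast [ha]
    ring_nf
  have trB₁ : B₁.trace = 0 := by
    rw [hB₁def, Matrix.trace_sub, Matrix.trace_smul, htr1, htrB]
    push_cast [hb]
    ring_nf
  -- key exp identity
  have key : ∀ (t : ℝ) (M : Matrix (Fin 2) (Fin 2) ℂ),
      (t : ℂ) • A + B = ((t * a + b : ℝ) : ℂ) • (1 : Matrix (Fin 2) (Fin 2) ℂ)
        + ((t : ℂ) • A₀ + B₁) := by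
    intro t M
    rw [hA₀def, hB₁def]
    push_cast
    module
  by_cases h0 : A₀ = 0
  · refine ⟨0, B₁, a, 0, Real.exp b, Matrix.isHermitian_zero, hB₁, by simp, trB₁, by simp,
      Real.exp_pos b, fun t => ?_⟩
    rw [key t 0, exp_smul_one_add, Matrix.trace_smul, h0]
    push_cast [Complex.ofReal_exp, ← Complex.exp_add]
    simp only [smul_eq_mul, smul_zero, add_zero, zero_add]
    ring_nf
  · set n : ℝ := (Matrix.trace (A₀ * B₁)).re with hn
    set d : ℝ := (Matrix.trace (A₀ * A₀)).re with hd
    have hdrw : A₀ * A₀ = A₀ * A₀ᴴ := by rw [hA₀]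
    have hdpos : 0 < d := by
      rw [hd, hdrw]; exact trace_mul_conjTranspose_re_pos A₀ h0
    have hnr : Matrix.trace (A₀ * B₁) = (n : ℂ) := by
      have h1 : (starRingEnd ℂ) (Matrix.trace (A₀ * B₁)) = Matrix.trace (A₀ * B₁) := by
        calc (starRingEnd ℂ) (Matrix.trace (A₀ * B₁))
            = Matrix.trace ((A₀ * B₁)ᴴ) := (Matrix.trace_conjTranspose _).symm
          _ = Matrix.trace (B₁ᴴ * A₀ᴴ) := by rw [Matrix.conjTranspose_mul]
          _ = Matrix.trace (B₁ * A₀) := by rw [hA₀, hB₁]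
          _ = Matrix.trace (A₀ * B₁) := Matrix.trace_mul_comm _ _
      exact (Complex.conj_eq_iff_re.mp h1).symm
    have hdr : Matrix.trace (A₀ * A₀) = (d : ℂ) := by
      have h1 : (starRingEnd ℂ) (Matrix.trace (A₀ * A₀)) = Matrix.trace (A₀ * A₀) := by
        calc (starRingEnd ℂ) (Matrix.trace (A₀ * A₀))
            = Matrix.trace ((A₀ * A₀)ᴴ) := (Matrix.trace_conjTranspose _).symm
          _ = Matrix.trace (A₀ᴴ * A₀ᴴ) := by rw [Matrix.conjTranspose_mul]
          _ = Matrix.trace (A₀ * A₀) := by rw [hA₀]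
      exact (Complex.conj_eq_iff_re.mp h1).symm
    set t₀ : ℝ := n / d with ht₀
    set B₀ : Matrix (Fin 2) (Fin 2) ℂ := B₁ - (t₀ : ℂ) • A₀ with hB₀def
    have hB₀herm : B₀.IsHermitian := by
      refine hB₁.sub ?_
      rw [Matrix.IsHermitian, Matrix.conjTranspose_smul, Complex.star_def,
        Complex.conj_ofReal, hA₀.eq]
    have trB₀ : B₀.trace = 0 := by
      rw [hB₀def, Matrix.trace_sub, Matrix.trace_smul, trB₁, trA₀]
      simp
    have trAB₀ : (A₀ * B₀).trace = 0 := by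
      rw [hB₀def, Matrix.mul_sub, Matrix.mul_smul, Matrix.trace_sub, Matrix.trace_smul,
        hnr, hdr]
      rw [smul_eq_mul, ht₀]
      have hdne : (d : ℂ) ≠ 0 := by exact_mod_cast hdpos.ne'
      push_cast
      field_simp
      simp
    refine ⟨A₀, B₀, a, t₀, Real.exp b, hA₀, hB₀herm, trA₀, trB₀, trAB₀,
      Real.exp_pos b, fun t => ?_⟩
    have hmat : ((t + t₀ : ℝ) : ℂ) • A₀ + B₀ = (t : ℂ) • A₀ + B₁ := by
      rw [hB₀def]
      push_cast
      module
    rw [hmat, key t 0, exp_smul_one_add, Matrix.trace_smul]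
    push_cast [Complex.ofReal_exp, ← Complex.exp_add]
    rw [smul_eq_mul]
    ring_nf
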